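/- Assume the agents are ordered: w_A(e) ≤ w_B(e) for every edge e ∈ E. Suppose the two agents can meet at a point of an edge at time T, in the following sense: there exist adjacent vertices u and v with e = {u,v} ∈ E, a real λ with 0 ≤ λ ≤ 1, and a real T with T ≥ d_A(s_A, u) + λ·w_A(e) and T ≥ d_B(s_B, v) + (1−λ)·w_B(e) (the meeting point lies on e at fraction λ of the way from u to v). Then min{ d_A(s_A, s_B), d_B(s_A, s_B) } ≤ 2T. -/
import Mathlib


open SimpleGraph

/-- The weighted shortest-path distance from `u` to `v` in `G` with edge weights `w`:
the infimum, over all walks from `u` to `v`, of the sum of the weights of traversed edges. -/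
noncomputable def wdist {V : Type*} (G : SimpleGraph V) (w : Sym2 V → ℝ) (u v : V) : ℝ :=
  sInf (Set.range fun p : G.Walk u v => (p.edges.map w).sum)

lemma walk_sum_nonneg {V : Type*} {G : SimpleGraph V} {w : Sym2 V → ℝ}
    (hw : ∀ e ∈ G.edgeSet, 0 ≤ w e) {a b : V} (p : G.Walk a b) :
    0 ≤ (p.edges.map w).sum := by
  apply List.sum_nonneg
  intro x hx
  obtain ⟨e, he, rfl⟩ := List.mem_map.1 hx
  exact hw e (p.edges_subset_edgeSet he)

lemma wdist_bdd {V : Type*} {G : SimpleGraph V} {w : Sym2 V → ℝ}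
    (hw : ∀ e ∈ G.edgeSet, 0 ≤ w e) (a b : V) :
    BddBelow (Set.range fun p : G.Walk a b => (p.edges.map w).sum) := by
  refine ⟨0, ?_⟩
  rintro x ⟨p, rfl⟩
  exact walk_sum_nonneg hw p

lemma wdist_le_walk {V : Type*} {G : SimpleGraph V} {w : Sym2 V → ℝ}
    (hw : ∀ e ∈ G.edgeSet, 0 ≤ w e) {a b : V} (p : G.Walk a b) :
    wdist G w a b ≤ (p.edges.map w).sum :=
  csInf_le (wdist_bdd hw a b) ⟨p, rfl⟩

/-- Ordered agents case (`w_A(e) ≤ w_B(e)` on every edge). If the two agents can meet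
at time `T` at the point of an edge `{u,v}` lying at fraction `λ` of the way from `u`
to `v` (i.e. `T ≥ d_A(s_A,u) + λ·w_A(e)` and `T ≥ d_B(s_B,v) + (1-λ)·w_B(e)`), then
`min{d_A(s_A,s_B), d_B(s_A,s_B)} ≤ 2T`. -/
theorem stmt_9 {V : Type*} [Fintype V] (G : SimpleGraph V) (hconn : G.Connected)
    (wA wB : Sym2 V → ℝ)
    (hposA : ∀ e ∈ G.edgeSet, 0 < wA e) (hposB : ∀ e ∈ G.edgeSet, 0 < wB e)
    (sA sB : V) (hne : sA ≠ sB)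
    (hord : ∀ e ∈ G.edgeSet, wA e ≤ wB e)
    (u v : V) (hadj : G.Adj u v)
    (lam : ℝ) (hlam0 : 0 ≤ lam) (hlam1 : lam ≤ 1)
    (T : ℝ)
    (hTA : wdist G wA sA u + lam * wA s(u, v) ≤ T)
    (hTB : wdist G wB sB v + (1 - lam) * wB s(u, v) ≤ T) :
    min (wdist G wA sA sB) (wdist G wB sA sB) ≤ 2 * T := by
  have hwA : ∀ e ∈ G.edgeSet, 0 ≤ wA e := fun e he => (hposA e he).le
  have hwB : ∀ e ∈ G.edgeSet, 0 ≤ wB e := fun e he => (hposB e he).le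
  have he : s(u, v) ∈ G.edgeSet := hadj
  -- key: for every p : sA → u and q : sB → v,
  -- wdist wA sA sB ≤ sumA p + wA e + sumB q
  have key : ∀ (p : G.Walk sA u) (q : G.Walk sB v),
      wdist G wA sA sB ≤ (p.edges.map wA).sum + wA s(u, v) + (q.edges.map wB).sum := by
    intro p q
    have h1 := wdist_le_walk hwA (p.append (SimpleGraph.Walk.cons hadj q.reverse))
    have hsum : ((p.append (SimpleGraph.Walk.cons hadj q.reverse)).edges.map wA).sum
        = (p.edges.map wA).sum + wA s(u, v) + (q.reverse.edges.map wA).sum := by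
      rw [SimpleGraph.Walk.edges_append, SimpleGraph.Walk.edges_cons]
      simp [List.sum_append]
      ring
    have hcmp : (q.reverse.edges.map wA).sum ≤ (q.edges.map wB).sum := by
      rw [SimpleGraph.Walk.edges_reverse, List.map_reverse, List.sum_reverse]
      apply List.sum_le_sum
      intro e hemem
      exact hord e (q.edges_subset_edgeSet hemem)
    -- need: sum over pairs; List.sum_le_sum signature may differ, handle below
    calc wdist G wA sA sB ≤ _ := h1
      _ = _ := hsum
      _ ≤ (p.edges.map wA).sum + wA s(u, v) + (q.edges.map wB).sum := by linarith
  have hne1 : Nonempty (G.Walk sA u) := hconn sA u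
  have hne2 : Nonempty (G.Walk sB v) := hconn sB v
  have key2 : wdist G wA sA sB ≤ wdist G wA sA u + wA s(u, v) + wdist G wB sB v := by
    have h3 : ∀ q : G.Walk sB v,
        wdist G wA sA sB - wA s(u, v) - (q.edges.map wB).sum ≤ wdist G wA sA u := by
      intro q
      apply le_csInf (Set.range_nonempty _)
      rintro x ⟨p, rfl⟩
      have := key p q
      linarith
    have h4 : wdist G wA sA sB - wA s(u, v) - wdist G wA sA u ≤ wdist G wB sB v := by
      apply le_csInf (Set.range_nonempty _)
      rintro x ⟨q, rfl⟩
      have := h3 q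
      linarith
    linarith
  have hord_e : wA s(u, v) ≤ wB s(u, v) := hord _ he
  have : wA s(u, v) ≤ lam * wA s(u, v) + (1 - lam) * wB s(u, v) := by nlinarith
  have : wdist G wA sA sB ≤ 2 * T := by linarith
  exact le_trans (min_le_left _ _) this
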